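/- arXiv:1410.2862 — 2 statements merged into one kernel-verified Lean document; each statement's English description precedes it below -/
import Mathlib

section
/- Let G be a 2-universal class of hash functions g : {0,1}^n → {0,1}^ℓ and X a random variable on {0,1}^n with min-entropy H∞(X) ≥ m. If G is chosen uniformly at random from 𝒢, independent of X, then the statistical distance between the joint distribution of (G(X), G) and (U_ℓ, G), where U_ℓ is uniform on {0,1}^ℓ independent of G, is at most (1/2)·√(2^(ℓ - m)). In particular, if ℓ ≤ m - 2·log₂(1/ε) + 2, this distance is at most ε. -/
open Finset

/-- Leftover-Hash Lemma: for a 2-universal class `𝒢` of hash functions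
`g : {0,1}^n → {0,1}^ℓ` and a source `X` with min-entropy at least `m` (i.e. `P x ≤ 2^(-m)`
for all `x`), the statistical distance between `(G(X), G)` and `(U_ℓ, G)` for uniform `G ∈ 𝒢`
is at most `(1/2)·√(2^(ℓ-m))`; in particular it is at most `ε` when
`ℓ ≤ m - 2 log₂(1/ε) + 2`. -/
theorem stmt3 (n ℓ : ℕ) (m ε : ℝ) (hε : 0 < ε)
    (𝒢 : Finset ((Fin n → Bool) → (Fin ℓ → Bool))) (h𝒢 : 𝒢.Nonempty)
    (huniv : ∀ x₁ x₂ : Fin n → Bool, x₁ ≠ x₂ →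
      ((𝒢.filter (fun g => g x₁ = g x₂)).card : ℝ) ≤ (𝒢.card : ℝ) / 2 ^ ℓ)
    (P : (Fin n → Bool) → ℝ) (hP : ∀ x, 0 ≤ P x) (hP1 : ∑ x, P x = 1)
    (hmin : ∀ x, P x ≤ (2 : ℝ) ^ (-m)) :
    (1 / 2) * ∑ g ∈ 𝒢, ∑ y : Fin ℓ → Bool,
        |(1 / (𝒢.card : ℝ)) * ∑ x ∈ Finset.univ.filter (fun x => g x = y), P x
          - (1 / (𝒢.card : ℝ)) * (1 / 2 ^ ℓ)|
      ≤ (1 / 2) * Real.sqrt ((2 : ℝ) ^ ((ℓ : ℝ) - m)) ∧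
    ((ℓ : ℝ) ≤ m - 2 * Real.logb 2 (1 / ε) + 2 →
      (1 / 2) * ∑ g ∈ 𝒢, ∑ y : Fin ℓ → Bool,
        |(1 / (𝒢.card : ℝ)) * ∑ x ∈ Finset.univ.filter (fun x => g x = y), P x
          - (1 / (𝒢.card : ℝ)) * (1 / 2 ^ ℓ)| ≤ ε) := by
  have hS : (0:ℝ) < (𝒢.card : ℝ) := by exact_mod_cast Finset.card_pos.mpr h𝒢
  set S : ℝ := (𝒢.card : ℝ) with hSdef
  set c : ℝ := 1 / 2 ^ ℓ with hcdef
  have hc0 : (0:ℝ) ≤ c := by positivity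
  set p : ((Fin n → Bool) → (Fin ℓ → Bool)) → (Fin ℓ → Bool) → ℝ :=
    fun g y => ∑ x ∈ Finset.univ.filter (fun x => g x = y), P x with hpdef
  have hfib : ∀ g, ∑ y : Fin ℓ → Bool, p g y = 1 := by
    intro g
    simpa [hpdef] using (Finset.sum_fiberwise (Finset.univ) g P).trans hP1
  have hPsq : ∑ x, (P x)^2 ≤ (2:ℝ)^(-m) := by
    calc ∑ x, (P x)^2 ≤ ∑ x, (2:ℝ)^(-m) * P x := by
          refine Finset.sum_le_sum fun x _ => ?_
          rw [sq]; exact mul_le_mul_of_nonneg_right (hmin x) (hP x)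
      _ = (2:ℝ)^(-m) := by rw [← Finset.mul_sum, hP1, mul_one]
  -- collision bound
  have step1 : ∀ g, ∑ y : Fin ℓ → Bool, (p g y)^2
      = ∑ x₁, ∑ x₂, if g x₁ = g x₂ then P x₁ * P x₂ else 0 := by
    intro g
    have h1 : ∀ y, (p g y)^2
        = ∑ x₁, ∑ x₂, (if g x₁ = y then P x₁ else 0) * (if g x₂ = y then P x₂ else 0) := by
      intro y
      rw [hpdef]
      simp only [Finset.sum_filter, sq, Finset.sum_mul_sum]
    rw [Finset.sum_congr rfl fun y _ => h1 y, Finset.sum_comm]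
    refine Finset.sum_congr rfl fun x₁ _ => ?_
    rw [Finset.sum_comm]
    refine Finset.sum_congr rfl fun x₂ _ => ?_
    rw [Finset.sum_eq_single (g x₁)]
    · by_cases h : g x₁ = g x₂ <;> simp [h, eq_comm]
    · intro y _ hy
      simp [Ne.symm hy]
    · simp
  have step2 : ∑ g ∈ 𝒢, ∑ y : Fin ℓ → Bool, (p g y)^2
      = ∑ x₁, ∑ x₂, ((𝒢.filter (fun g => g x₁ = g x₂)).card : ℝ) * (P x₁ * P x₂) := by
    rw [Finset.sum_congr rfl fun g _ => step1 g, Finset.sum_comm]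
    refine Finset.sum_congr rfl fun x₁ _ => ?_
    rw [Finset.sum_comm]
    refine Finset.sum_congr rfl fun x₂ _ => ?_
    rw [← Finset.sum_filter, Finset.sum_const, nsmul_eq_mul]
  have hterm : ∀ x₁ x₂, ((𝒢.filter (fun g => g x₁ = g x₂)).card : ℝ) * (P x₁ * P x₂)
      ≤ S * c * (P x₁ * P x₂) + (if x₁ = x₂ then S * (P x₁)^2 else 0) := by
    intro x₁ x₂
    by_cases h : x₁ = x₂
    · subst h
      rw [if_pos rfl]
      have h1 : ((𝒢.filter (fun g => g x₁ = g x₁)).card : ℝ) ≤ S := by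
        rw [hSdef]
        exact_mod_cast Finset.card_le_card (Finset.filter_subset _ _)
      have h2 : (0:ℝ) ≤ P x₁ * P x₁ := mul_nonneg (hP x₁) (hP x₁)
      nlinarith [mul_nonneg (mul_nonneg hS.le hc0) h2]
    · rw [if_neg h, add_zero]
      have h1 := huniv x₁ x₂ h
      have h2 : S / 2 ^ ℓ = S * c := by rw [hcdef]; ring
      rw [← h2]
      exact mul_le_mul_of_nonneg_right h1 (mul_nonneg (hP x₁) (hP x₂))
  have hcoll : ∑ g ∈ 𝒢, ∑ y : Fin ℓ → Bool, (p g y)^2 ≤ S * ((2:ℝ)^(-m) + c) := by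
    rw [step2]
    calc ∑ x₁, ∑ x₂, ((𝒢.filter (fun g => g x₁ = g x₂)).card : ℝ) * (P x₁ * P x₂)
        ≤ ∑ x₁, ∑ x₂, (S * c * (P x₁ * P x₂) + (if x₁ = x₂ then S * (P x₁)^2 else 0)) := by
          exact Finset.sum_le_sum fun x₁ _ => Finset.sum_le_sum fun x₂ _ => hterm x₁ x₂
      _ = S * c * ((∑ x, P x) * (∑ x, P x)) + S * ∑ x, (P x)^2 := by
          have e1 : ∀ x₁ : Fin n → Bool,
              ∑ x₂, (S * c * (P x₁ * P x₂) + (if x₁ = x₂ then S * (P x₁)^2 else 0))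
              = S * c * P x₁ * (∑ x, P x) + S * (P x₁)^2 := by
            intro x₁
            rw [Finset.sum_add_distrib, Finset.sum_ite_eq, if_pos (Finset.mem_univ x₁),
              Finset.mul_sum]
            congr 1
            exact Finset.sum_congr rfl fun x _ => by ring
          rw [Finset.sum_congr rfl fun x₁ _ => e1 x₁, Finset.sum_add_distrib,
            ← Finset.sum_mul, ← Finset.mul_sum, ← Finset.mul_sum]
          ring_nf
      _ ≤ S * c * 1 + S * (2:ℝ)^(-m) := by
          rw [hP1]
          have := mul_le_mul_of_nonneg_left hPsq hS.le
          linarith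
      _ = S * ((2:ℝ)^(-m) + c) := by ring
  have hcard : (Fintype.card (Fin ℓ → Bool) : ℝ) = 2 ^ ℓ := by
    simp [Fintype.card_fun]
  have hsq : ∑ g ∈ 𝒢, ∑ y : Fin ℓ → Bool, (p g y - c)^2 ≤ S * (2:ℝ)^(-m) := by
    have expand : ∀ g ∈ 𝒢, ∑ y : Fin ℓ → Bool, (p g y - c)^2
        = (∑ y : Fin ℓ → Bool, (p g y)^2) - 2*c + c := by
      intro g _
      have h2c : (Fintype.card (Fin ℓ → Bool) : ℝ) * c ^ 2 = c := by
        rw [hcard, hcdef]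
        field_simp
      calc ∑ y : Fin ℓ → Bool, (p g y - c)^2
          = ∑ y : Fin ℓ → Bool, ((p g y)^2 - 2*c*(p g y) + c^2) := by
            exact Finset.sum_congr rfl fun y _ => by ring
        _ = (∑ y : Fin ℓ → Bool, (p g y)^2) - 2*c*(∑ y : Fin ℓ → Bool, p g y)
              + (Fintype.card (Fin ℓ → Bool) : ℝ) * c^2 := by
            rw [Finset.sum_add_distrib, Finset.sum_sub_distrib, ← Finset.mul_sum,
              Finset.sum_const, nsmul_eq_mul, Finset.card_univ]
        _ = (∑ y : Fin ℓ → Bool, (p g y)^2) - 2*c + c := by rw [hfib g, h2c]; ring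
    rw [Finset.sum_congr rfl expand, Finset.sum_add_distrib, Finset.sum_sub_distrib,
      Finset.sum_const, Finset.sum_const, nsmul_eq_mul, nsmul_eq_mul, ← hSdef]
    nlinarith
  -- Cauchy–Schwarz
  have habsnn : (0:ℝ) ≤ ∑ g ∈ 𝒢, ∑ y : Fin ℓ → Bool, |p g y - c| := by positivity
  have hCS : (∑ g ∈ 𝒢, ∑ y : Fin ℓ → Bool, |p g y - c|)^2
      ≤ (S * 2^ℓ) * (S * (2:ℝ)^(-m)) := by
    have h := Finset.sum_mul_sq_le_sq_mul_sq
      (𝒢 ×ˢ (Finset.univ : Finset (Fin ℓ → Bool))) (fun _ => (1:ℝ))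
      (fun z => |p z.1 z.2 - c|)
    simp only [one_mul, one_pow, sq_abs] at h
    rw [Finset.sum_product' 𝒢 Finset.univ (fun g y => |p g y - c|),
      Finset.sum_product' 𝒢 Finset.univ (fun g y => (p g y - c)^2)] at h
    have hA : (∑ _z ∈ 𝒢 ×ˢ (Finset.univ : Finset (Fin ℓ → Bool)), (1:ℝ)) = S * 2^ℓ := by
      rw [Finset.sum_const, Finset.card_product, nsmul_eq_mul, Finset.card_univ]
      push_cast [Fintype.card_fun]
      simp [hSdef]
    rw [hA] at h
    calc (∑ g ∈ 𝒢, ∑ y : Fin ℓ → Bool, |p g y - c|)^2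
        ≤ (S * 2^ℓ) * ∑ g ∈ 𝒢, ∑ y : Fin ℓ → Bool, (p g y - c)^2 := h
      _ ≤ (S * 2^ℓ) * (S * (2:ℝ)^(-m)) := by
          exact mul_le_mul_of_nonneg_left hsq (by positivity)
  have hprod : (S * 2^ℓ) * (S * (2:ℝ)^(-m)) = S^2 * (2:ℝ)^((ℓ:ℝ) - m) := by
    rw [sub_eq_add_neg, Real.rpow_add two_pos, Real.rpow_natCast]
    ring
  have habs : ∑ g ∈ 𝒢, ∑ y : Fin ℓ → Bool, |p g y - c|
      ≤ S * Real.sqrt ((2:ℝ)^((ℓ:ℝ) - m)) := by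
    have h1 : ∑ g ∈ 𝒢, ∑ y : Fin ℓ → Bool, |p g y - c|
        = Real.sqrt ((∑ g ∈ 𝒢, ∑ y : Fin ℓ → Bool, |p g y - c|)^2) :=
      (Real.sqrt_sq habsnn).symm
    rw [h1]
    calc Real.sqrt ((∑ g ∈ 𝒢, ∑ y : Fin ℓ → Bool, |p g y - c|)^2)
        ≤ Real.sqrt (S^2 * (2:ℝ)^((ℓ:ℝ) - m)) := Real.sqrt_le_sqrt (hCS.trans_eq hprod)
      _ = S * Real.sqrt ((2:ℝ)^((ℓ:ℝ) - m)) := by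
          rw [Real.sqrt_mul (sq_nonneg S), Real.sqrt_sq hS.le]
  -- rewrite the goal's summand
  have hgoal : ∀ g ∈ 𝒢, ∑ y : Fin ℓ → Bool, |(1 / S) * p g y - (1 / S) * c|
      = (1 / S) * ∑ y : Fin ℓ → Bool, |p g y - c| := by
    intro g _
    rw [Finset.mul_sum]
    refine Finset.sum_congr rfl fun y _ => ?_
    rw [← mul_sub, abs_mul, abs_of_nonneg (by positivity : (0:ℝ) ≤ 1 / S)]
  have main1 : (1 / 2) * ∑ g ∈ 𝒢, ∑ y : Fin ℓ → Bool, |(1 / S) * p g y - (1 / S) * c|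
      ≤ (1 / 2) * Real.sqrt ((2:ℝ) ^ ((ℓ:ℝ) - m)) := by
    rw [Finset.sum_congr rfl hgoal, ← Finset.mul_sum]
    have h2 : (1 / S) * ∑ g ∈ 𝒢, ∑ y : Fin ℓ → Bool, |p g y - c|
        ≤ (1 / S) * (S * Real.sqrt ((2:ℝ)^((ℓ:ℝ) - m))) :=
      mul_le_mul_of_nonneg_left habs (by positivity)
    have h3 : (1 / S) * (S * Real.sqrt ((2:ℝ)^((ℓ:ℝ) - m)))
        = Real.sqrt ((2:ℝ)^((ℓ:ℝ) - m)) := by field_simp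
    rw [h3] at h2
    linarith
  refine ⟨main1, fun hm => ?_⟩
  have hlog : (2:ℝ) ^ (Real.logb 2 (1/ε)) = 1/ε :=
    Real.rpow_logb two_pos (by norm_num) (by positivity)
  have h3 : (2:ℝ)^((2:ℝ) - 2*Real.logb 2 (1/ε)) = 4 * ε^2 := by
    rw [Real.rpow_sub two_pos,
      show 2*Real.logb 2 (1/ε) = Real.logb 2 (1/ε) * 2 by ring,
      Real.rpow_mul (by norm_num : (0:ℝ) ≤ 2), hlog,
      show (2:ℝ) = ((2:ℕ):ℝ) by norm_num, Real.rpow_natCast, Real.rpow_natCast]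
    field_simp
    ring
  have h2 : (2:ℝ)^((ℓ:ℝ) - m) ≤ 4 * ε^2 := by
    rw [← h3]
    exact Real.rpow_le_rpow_left_iff one_lt_two |>.mpr (by linarith)
  have h4 : Real.sqrt ((2:ℝ)^((ℓ:ℝ) - m)) ≤ 2 * ε := by
    calc Real.sqrt ((2:ℝ)^((ℓ:ℝ) - m)) ≤ Real.sqrt (4 * ε^2) := Real.sqrt_le_sqrt h2
      _ = 2 * ε := by
          rw [show (4:ℝ) * ε^2 = (2*ε)^2 by ring, Real.sqrt_sq (by positivity)]
  calc (1 / 2) * ∑ g ∈ 𝒢, ∑ y : Fin ℓ → Bool, |(1 / S) * p g y - (1 / S) * c|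
      ≤ (1 / 2) * Real.sqrt ((2:ℝ) ^ ((ℓ:ℝ) - m)) := main1
    _ ≤ (1 / 2) * (2 * ε) := by linarith
    _ = ε := by ring
end

section
/- For a probability distribution P on a finite alphabet 𝒳 and ε > 0, |T_{P,ε}^n| ≥ (1 − 2|𝒳|·exp(−nε²/2))·exp(nH(P) − nεD), where D = Σ_{x : P(x)≠0} (−log P(x)). -/
open Finset
open scoped Classical

-- h(t) = t*((1-p)+p*e^t) - p*(1-p)*(e^t-1) ≥ 0 for t ≥ 0
lemma aux1 (p : ℝ) (hp : 0 ≤ p) (hp1 : p ≤ 1) (t : ℝ) (ht : 0 ≤ t) :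
    p * (1 - p) * (Real.exp t - 1) ≤ t * ((1 - p) + p * Real.exp t) := by
  set h : ℝ → ℝ := fun s => s * ((1 - p) + p * Real.exp s) - p * (1 - p) * (Real.exp s - 1) with hh
  have hderiv : ∀ s : ℝ, HasDerivAt h (((1 - p) + p * Real.exp s) + s * (p * Real.exp s)
      - p * (1 - p) * Real.exp s) s := by
    intro s
    have h1 : HasDerivAt (fun s : ℝ => s * ((1 - p) + p * Real.exp s))
        (1 * ((1 - p) + p * Real.exp s) + s * (p * Real.exp s)) s := by
      exact (hasDerivAt_id s).mul (((Real.hasDerivAt_exp s).const_mul p).const_add (1 - p))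
    have h2 : HasDerivAt (fun s : ℝ => p * (1 - p) * (Real.exp s - 1))
        (p * (1 - p) * Real.exp s) s := by
      simpa using ((Real.hasDerivAt_exp s).sub_const 1).const_mul (p * (1 - p))
    exact (h1.sub h2).congr_deriv (by ring)
  have hmono : MonotoneOn h (Set.Ici (0:ℝ)) := by
    apply monotoneOn_of_deriv_nonneg (convex_Ici 0)
      (fun s _ => (hderiv s).differentiableAt.continuousAt.continuousWithinAt)
      (fun s _ => (hderiv s).differentiableAt.differentiableWithinAt)
    intro s hs
    rw [interior_Ici] at hs
    rw [(hderiv s).deriv]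
    have hes : (0:ℝ) < Real.exp s := Real.exp_pos s
    have hsp : 0 ≤ p * Real.exp s * (s + p) :=
      mul_nonneg (mul_nonneg hp hes.le) (by nlinarith [le_of_lt (Set.mem_Ioi.mp hs)])
    nlinarith [hsp]
  have h0 : h 0 = 0 := by simp [hh]
  have := hmono (Set.self_mem_Ici) (Set.mem_Ici.mpr ht) ht
  rw [h0] at this
  simp only [hh] at this
  linarith [this]

-- Bernoulli MGF bound, t ≥ 0 case
lemma aux2 (p : ℝ) (hp : 0 ≤ p) (hp1 : p ≤ 1) (t : ℝ) (ht : 0 ≤ t) :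
    (1 - p) + p * Real.exp t ≤ Real.exp (p * t + t ^ 2 / 2) := by
  have hDpos : ∀ s : ℝ, (0:ℝ) < (1 - p) + p * Real.exp s := by
    intro s
    rcases eq_or_lt_of_le hp with h | h
    · simp [← h]
    · have := Real.exp_pos s
      nlinarith
  set g : ℝ → ℝ := fun s => p * s + s ^ 2 / 2 - Real.log ((1 - p) + p * Real.exp s) with hg
  have hderiv : ∀ s : ℝ, HasDerivAt g (p + s - (p * Real.exp s) / ((1 - p) + p * Real.exp s)) s := by
    intro s
    have h1 : HasDerivAt (fun s : ℝ => p * s + s ^ 2 / 2) (p + s) s := by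
      have := ((hasDerivAt_pow 2 s).div_const 2).const_add 0
      have h2 : HasDerivAt (fun s : ℝ => p * s) p s := by
        simpa using (hasDerivAt_id s).const_mul p
      exact (h2.add ((hasDerivAt_pow 2 s).div_const 2)).congr_deriv (by norm_num)
    have h3 : HasDerivAt (fun s : ℝ => (1 - p) + p * Real.exp s) (p * Real.exp s) s :=
      ((Real.hasDerivAt_exp s).const_mul p).const_add (1 - p)
    have h4 := h3.log (ne_of_gt (hDpos s))
    exact h1.sub h4
  have hmono : MonotoneOn g (Set.Ici (0:ℝ)) := by
    apply monotoneOn_of_deriv_nonneg (convex_Ici 0)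
      (fun s _ => (hderiv s).differentiableAt.continuousAt.continuousWithinAt)
      (fun s _ => (hderiv s).differentiableAt.differentiableWithinAt)
    intro s hs
    rw [interior_Ici] at hs
    rw [(hderiv s).deriv]
    have hD := hDpos s
    rw [sub_nonneg, div_le_iff₀ hD]
    have := aux1 p hp hp1 s (le_of_lt (Set.mem_Ioi.mp hs))
    nlinarith [this]
  have h0 : g 0 = 0 := by simp [hg]
  have hge : 0 ≤ g t := by
    have := hmono (Set.self_mem_Ici) (Set.mem_Ici.mpr ht) ht
    rw [h0] at this; exact this
  have hlog : Real.log ((1 - p) + p * Real.exp t) ≤ p * t + t ^ 2 / 2 := by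
    simp only [hg] at hge; linarith
  calc (1 - p) + p * Real.exp t = Real.exp (Real.log ((1 - p) + p * Real.exp t)) :=
        (Real.exp_log (hDpos t)).symm
    _ ≤ Real.exp (p * t + t ^ 2 / 2) := Real.exp_le_exp.mpr hlog

lemma bernoulli_mgf (p : ℝ) (hp : 0 ≤ p) (hp1 : p ≤ 1) (t : ℝ) :
    (1 - p) + p * Real.exp t ≤ Real.exp (p * t + t ^ 2 / 2) := by
  rcases le_or_gt 0 t with ht | ht
  · exact aux2 p hp hp1 t ht
  · have h := aux2 (1 - p) (by linarith) (by linarith) (-t) (by linarith)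
    -- h : p + (1-p) * exp(-t) ≤ exp((1-p)*(-t) + t²/2)
    have hmul := mul_le_mul_of_nonneg_right h (le_of_lt (Real.exp_pos t))
    have e1 : ((1 - (1 - p)) + (1 - p) * Real.exp (-t)) * Real.exp t
        = (1 - p) + p * Real.exp t := by
      rw [add_mul, mul_assoc, ← Real.exp_add]
      simp; ring
    have e2 : Real.exp ((1 - p) * (-t) + (-t) ^ 2 / 2) * Real.exp t
        = Real.exp (p * t + t ^ 2 / 2) := by
      rw [← Real.exp_add]; ring_nf
    rw [e1, e2] at hmul
    exact hmul

lemma sum_prod_pow (k n : ℕ) (g : Fin k → ℝ) :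
    ∑ xs : Fin n → Fin k, ∏ i, g (xs i) = (∑ y, g y) ^ n := by
  have : (∑ y, g y) ^ n = ∏ _i : Fin n, ∑ y, g y := by
    rw [Finset.prod_const, Finset.card_univ, Fintype.card_fin]
  rw [this, Finset.prod_univ_sum (fun _ => univ) (fun _ y => g y), Fintype.piFinset_univ]

lemma mgf_eq (k n : ℕ) (P : Fin k → ℝ) (hP1 : ∑ x, P x = 1) (x : Fin k) (t : ℝ) :
    ∑ xs : Fin n → Fin k, (∏ i, P (xs i)) *
      Real.exp (t * ((univ.filter fun i => xs i = x).card : ℝ))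
    = ((1 - P x) + P x * Real.exp t) ^ n := by
  have key : ∀ xs : Fin n → Fin k,
      (∏ i, P (xs i)) * Real.exp (t * ((univ.filter fun i => xs i = x).card : ℝ))
      = ∏ i, (P (xs i) * Real.exp (t * (if xs i = x then (1:ℝ) else 0))) := by
    intro xs
    rw [Finset.prod_mul_distrib]
    congr 1
    rw [← Real.exp_sum]
    congr 1
    rw [Finset.card_filter]
    push_cast
    rw [Finset.mul_sum]
  calc ∑ xs : Fin n → Fin k, (∏ i, P (xs i)) *
        Real.exp (t * ((univ.filter fun i => xs i = x).card : ℝ))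
      = ∑ xs : Fin n → Fin k, ∏ i, (P (xs i) * Real.exp (t * (if xs i = x then (1:ℝ) else 0))) :=
        Finset.sum_congr rfl (fun xs _ => key xs)
    _ = (∑ y, P y * Real.exp (t * (if y = x then (1:ℝ) else 0))) ^ n :=
        sum_prod_pow k n (fun y => P y * Real.exp (t * (if y = x then (1:ℝ) else 0)))
    _ = ((1 - P x) + P x * Real.exp t) ^ n := by
        congr 1
        rw [← Finset.sum_erase_add univ _ (Finset.mem_univ x)]
        have h1 : ∑ y ∈ univ.erase x, P y * Real.exp (t * if y = x then (1:ℝ) else 0)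
            = ∑ y ∈ univ.erase x, P y := by
          apply Finset.sum_congr rfl; intro y hy
          rw [if_neg (Finset.ne_of_mem_erase hy), mul_zero, Real.exp_zero, mul_one]
        have h2 : ∑ y ∈ univ.erase x, P y = 1 - P x := by
          have := Finset.sum_erase_add univ P (Finset.mem_univ x)
          rw [hP1] at this; linarith
        rw [h1, h2, if_pos rfl, mul_one]

lemma bernoulli_mgf' (p : ℝ) (hp : 0 ≤ p) (hp1 : p ≤ 1) (t : ℝ) :
    (1 - p) + p * Real.exp t ≤ Real.exp (p * t + t ^ 2 / 2) := bernoulli_mgf p hp hp1 t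

lemma tail_bound (k n : ℕ) (P : Fin k → ℝ) (hP : ∀ x, 0 ≤ P x) (hP1 : ∑ x, P x = 1)
    (x : Fin k) (t b : ℝ) (A : Finset (Fin n → Fin k))
    (hA : ∀ xs ∈ A, (0:ℝ) ≤ t * ((univ.filter fun i => xs i = x).card : ℝ) - b) :
    ∑ xs ∈ A, ∏ i, P (xs i) ≤ Real.exp ((n:ℝ) * (P x * t + t ^ 2 / 2) - b) := by
  have hf : ∀ xs : Fin n → Fin k, 0 ≤ ∏ i, P (xs i) :=
    fun xs => Finset.prod_nonneg (fun i _ => hP _)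
  have hpx1 : P x ≤ 1 := by
    rw [← hP1]
    exact Finset.single_le_sum (fun y _ => hP y) (Finset.mem_univ x)
  calc ∑ xs ∈ A, ∏ i, P (xs i)
      ≤ ∑ xs ∈ A, (∏ i, P (xs i)) *
          Real.exp (t * ((univ.filter fun i => xs i = x).card : ℝ) - b) := by
        apply Finset.sum_le_sum; intro xs hxs
        nth_rewrite 1 [← mul_one (∏ i, P (xs i))]
        apply mul_le_mul_of_nonneg_left _ (hf xs)
        rw [← Real.exp_zero]
        exact Real.exp_le_exp.mpr (hA xs hxs)
    _ ≤ ∑ xs : Fin n → Fin k, (∏ i, P (xs i)) *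
          Real.exp (t * ((univ.filter fun i => xs i = x).card : ℝ) - b) := by
        apply Finset.sum_le_sum_of_subset_of_nonneg (Finset.subset_univ A)
        intro xs _ _
        exact mul_nonneg (hf xs) (Real.exp_pos _).le
    _ = Real.exp (-b) * ∑ xs : Fin n → Fin k, (∏ i, P (xs i)) *
          Real.exp (t * ((univ.filter fun i => xs i = x).card : ℝ)) := by
        rw [Finset.mul_sum]
        apply Finset.sum_congr rfl; intro xs _
        rw [Real.exp_sub, Real.exp_neg]
        ring
    _ = Real.exp (-b) * ((1 - P x) + P x * Real.exp t) ^ n := by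
        rw [mgf_eq k n P hP1 x t]
    _ ≤ Real.exp (-b) * Real.exp (P x * t + t ^ 2 / 2) ^ n := by
        apply mul_le_mul_of_nonneg_left _ (Real.exp_pos _).le
        apply pow_le_pow_left₀ _ (bernoulli_mgf' (P x) (hP x) hpx1 t)
        nlinarith [Real.exp_pos t, hP x]
    _ = Real.exp ((n:ℝ) * (P x * t + t ^ 2 / 2) - b) := by
        rw [← Real.exp_nat_mul, ← Real.exp_add]
        ring_nf

lemma elem_bound (k n : ℕ) (ε : ℝ) (P : Fin k → ℝ) (hP : ∀ x, 0 ≤ P x) (hP1 : ∑ x, P x = 1)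
    (xs : Fin n → Fin k)
    (hxs : ∀ x, |((univ.filter fun i => xs i = x).card : ℝ) - n * P x| ≤ ε * n ∧
      (P x = 0 → (univ.filter fun i => xs i = x).card = 0)) :
    ∏ i, P (xs i) ≤ Real.exp ((n:ℝ) * ε * (∑ x ∈ univ.filter (fun x => P x ≠ 0), -Real.log (P x))
      - (n:ℝ) * (∑ x, -(P x * Real.log (P x)))) := by
  have hle1 : ∀ x, P x ≤ 1 := by
    intro x; rw [← hP1]
    exact Finset.single_le_sum (fun y _ => hP y) (Finset.mem_univ x)
  have step1 : ∏ i, P (xs i) = ∏ x, P x ^ (univ.filter fun i => xs i = x).card := by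
    rw [← Finset.prod_fiberwise univ (fun i => xs i) (fun i => P (xs i))]
    apply Finset.prod_congr rfl; intro x _
    rw [show ∏ i ∈ univ.filter (fun i => xs i = x), P (xs i)
        = ∏ i ∈ univ.filter (fun i => xs i = x), P x from
      Finset.prod_congr rfl (fun i hi => by rw [(Finset.mem_filter.mp hi).2])]
    rw [Finset.prod_const]
  have step2 : ∏ x, P x ^ (univ.filter fun i => xs i = x).card
      = Real.exp (∑ x, ((univ.filter fun i => xs i = x).card : ℝ) * Real.log (P x)) := by
    rw [Real.exp_sum]
    apply Finset.prod_congr rfl; intro x _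
    by_cases hx : P x = 0
    · rw [(hxs x).2 hx]; simp
    · have hpos : 0 < P x := lt_of_le_of_ne (hP x) (Ne.symm hx)
      rw [← Real.exp_log hpos, ← Real.exp_nat_mul, Real.exp_log hpos]
  have step3 : ∑ x, ((univ.filter fun i => xs i = x).card : ℝ) * Real.log (P x)
      ≤ (n:ℝ) * ε * (∑ x ∈ univ.filter (fun x => P x ≠ 0), -Real.log (P x))
        - (n:ℝ) * (∑ x, -(P x * Real.log (P x))) := by
    have expand : (n:ℝ) * ε * (∑ x ∈ univ.filter (fun x => P x ≠ 0), -Real.log (P x))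
        - (n:ℝ) * (∑ x, -(P x * Real.log (P x)))
        = ∑ x, ((if P x ≠ 0 then (n:ℝ) * ε * (-Real.log (P x)) else 0)
            + (n:ℝ) * (P x * Real.log (P x))) := by
      rw [Finset.sum_add_distrib, ← Finset.sum_filter]
      rw [Finset.mul_sum, Finset.mul_sum]
      simp [mul_neg, Finset.sum_neg_distrib, sub_neg_eq_add]
    rw [expand]
    apply Finset.sum_le_sum
    intro x _
    by_cases hx : P x = 0
    · rw [(hxs x).2 hx, if_neg (by simp [hx])]
      simp [hx]
    · rw [if_pos hx]
      have hlog : Real.log (P x) ≤ 0 := Real.log_nonpos (hP x) (hle1 x)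
      have habs := abs_le.mp (hxs x).1
      have hN : (n:ℝ) * P x - ε * n ≤ ((univ.filter fun i => xs i = x).card : ℝ) := by
        linarith [habs.1]
      nlinarith [mul_le_mul_of_nonpos_right hN hlog]
  calc ∏ i, P (xs i)
      = Real.exp (∑ x, ((univ.filter fun i => xs i = x).card : ℝ) * Real.log (P x)) := by
        rw [step1, step2]
    _ ≤ _ := Real.exp_le_exp.mpr step3

/-- Lower bound on the cardinality of the `ε`-typical set:
`|T_{P,ε}^n| ≥ (1 - 2|𝒳|·exp(-nε²/2))·exp(nH(P) - nεD)` with `D = ∑_{x : P(x)≠0} (-log P(x))`. -/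
theorem stmt6 (k n : ℕ) (ε : ℝ) (hε : 0 < ε) (P : Fin k → ℝ)
    (hP : ∀ x, 0 ≤ P x) (hP1 : ∑ x, P x = 1) :
    (((Finset.univ.filter (fun xs : Fin n → Fin k =>
        ∀ x, |((Finset.univ.filter (fun i => xs i = x)).card : ℝ) - n * P x| ≤ ε * n ∧
          (P x = 0 → (Finset.univ.filter (fun i => xs i = x)).card = 0))).card : ℝ))
      ≥ (1 - 2 * k * Real.exp (-(n : ℝ) * ε ^ 2 / 2)) *
        Real.exp ((n : ℝ) * (∑ x, -(P x * Real.log (P x)))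
          - (n : ℝ) * ε * (∑ x ∈ Finset.univ.filter (fun x => P x ≠ 0), -Real.log (P x))) := by
  set H : ℝ := ∑ x, -(P x * Real.log (P x)) with hH
  set D : ℝ := ∑ x ∈ Finset.univ.filter (fun x => P x ≠ 0), -Real.log (P x) with hD
  set M : ℝ := Real.exp ((n:ℝ) * ε * D - (n:ℝ) * H) with hM
  set cond : (Fin n → Fin k) → Prop := fun xs =>
    ∀ x, |((Finset.univ.filter (fun i => xs i = x)).card : ℝ) - n * P x| ≤ ε * n ∧
      (P x = 0 → (Finset.univ.filter (fun i => xs i = x)).card = 0) with hcond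
  set T : Finset (Fin n → Fin k) := Finset.univ.filter cond with hT
  have hf : ∀ xs : Fin n → Fin k, 0 ≤ ∏ i, P (xs i) :=
    fun xs => Finset.prod_nonneg (fun i _ => hP _)
  -- (1) sum over T ≤ card * M
  have h1 : ∑ xs ∈ T, ∏ i, P (xs i) ≤ (T.card : ℝ) * M := by
    have := Finset.sum_le_card_nsmul T (fun xs => ∏ i, P (xs i)) M
      (fun xs hxs => elem_bound k n ε P hP hP1 xs ((Finset.mem_filter.mp hxs).2))
    simpa [nsmul_eq_mul] using this
  -- (3) total sum = 1
  have h3 : ∑ xs : Fin n → Fin k, ∏ i, P (xs i) = 1 := by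
    rw [sum_prod_pow k n P, hP1, one_pow]
  -- (2) sum over complement
  have h2 : ∑ xs ∈ Finset.univ.filter (fun xs => ¬ cond xs), ∏ i, P (xs i)
      ≤ 2 * k * Real.exp (-(n : ℝ) * ε ^ 2 / 2) := by
    set Tc : Finset (Fin n → Fin k) := Finset.univ.filter (fun xs => ¬ cond xs) with hTc
    have cover : ∀ xs ∈ Tc, ∏ i, P (xs i) ≤ ∑ x : Fin k,
        ((if ε * n < ((univ.filter fun i => xs i = x).card : ℝ) - n * P x
            then ∏ i, P (xs i) else 0)
          + (if ((univ.filter fun i => xs i = x).card : ℝ) - n * P x < -(ε * n)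
            then ∏ i, P (xs i) else 0)) := by
      intro xs hxs
      by_cases hf0 : ∏ i, P (xs i) = 0
      · rw [hf0]
        apply Finset.sum_nonneg
        intro x _
        split_ifs <;> simp
      have hfpos : 0 < ∏ i, P (xs i) := lt_of_le_of_ne (hf xs) (Ne.symm hf0)
      have hnonneg : ∀ (c : Prop) [Decidable c], (0:ℝ) ≤ if c then ∏ i, P (xs i) else 0 := by
        intro c _; split_ifs
        · exact (hf xs)
        · exact le_refl 0
      have hncond : ¬ cond xs := (Finset.mem_filter.mp hxs).2
      rw [hcond] at hncond
      obtain ⟨x, hx⟩ := not_forall.mp hncond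
      rcases not_and_or.mp hx with hA | hB
      · -- tail event at x
        have habs : ε * n < |((univ.filter fun i => xs i = x).card : ℝ) - n * P x| :=
          not_le.mp hA
        have hterm : ∏ i, P (xs i) ≤
            ((if ε * n < ((univ.filter fun i => xs i = x).card : ℝ) - n * P x
                then ∏ i, P (xs i) else 0)
              + (if ((univ.filter fun i => xs i = x).card : ℝ) - n * P x < -(ε * n)
                then ∏ i, P (xs i) else 0)) := by
          rcases lt_abs.mp habs with h | h
          · rw [if_pos h]
            linarith [hnonneg (((univ.filter fun i => xs i = x).card : ℝ) - n * P x < -(ε * n))]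
          · rw [if_pos (by linarith : ((univ.filter fun i => xs i = x).card : ℝ) - n * P x < -(ε * n))]
            linarith [hnonneg (ε * n < ((univ.filter fun i => xs i = x).card : ℝ) - n * P x)]
        exact le_trans hterm (Finset.single_le_sum (f := fun y : Fin k =>
          (if ε * n < ((univ.filter fun i => xs i = y).card : ℝ) - n * P y
              then ∏ i, P (xs i) else 0)
            + (if ((univ.filter fun i => xs i = y).card : ℝ) - n * P y < -(ε * n)
              then ∏ i, P (xs i) else 0))
          (fun y _ => add_nonneg (hnonneg _) (hnonneg _)) (Finset.mem_univ x))
      · -- P x = 0 but count nonzero: product is zero, contradiction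
        exfalso
        obtain ⟨hx0, hNne⟩ := Classical.not_imp.mp hB
        have : (univ.filter fun i => xs i = x).Nonempty :=
          Finset.card_pos.mp (Nat.pos_of_ne_zero hNne)
        obtain ⟨i, hi⟩ := this
        have : P (xs i) = 0 := by rw [(Finset.mem_filter.mp hi).2, hx0]
        exact hf0 (Finset.prod_eq_zero (Finset.mem_univ i) this)
    calc ∑ xs ∈ Tc, ∏ i, P (xs i)
        ≤ ∑ xs ∈ Tc, ∑ x : Fin k,
            ((if ε * n < ((univ.filter fun i => xs i = x).card : ℝ) - n * P x
                then ∏ i, P (xs i) else 0)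
              + (if ((univ.filter fun i => xs i = x).card : ℝ) - n * P x < -(ε * n)
                then ∏ i, P (xs i) else 0)) := Finset.sum_le_sum cover
      _ = ∑ x : Fin k, ∑ xs ∈ Tc,
            ((if ε * n < ((univ.filter fun i => xs i = x).card : ℝ) - n * P x
                then ∏ i, P (xs i) else 0)
              + (if ((univ.filter fun i => xs i = x).card : ℝ) - n * P x < -(ε * n)
                then ∏ i, P (xs i) else 0)) := Finset.sum_comm
      _ ≤ ∑ x : Fin k, (2 * Real.exp (-(n : ℝ) * ε ^ 2 / 2)) := by
          apply Finset.sum_le_sum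
          intro x _
          rw [Finset.sum_add_distrib, ← Finset.sum_filter, ← Finset.sum_filter]
          have hup : ∑ xs ∈ Tc.filter (fun xs =>
              ε * n < ((univ.filter fun i => xs i = x).card : ℝ) - n * P x), ∏ i, P (xs i)
              ≤ Real.exp (-(n : ℝ) * ε ^ 2 / 2) := by
            have := tail_bound k n P hP hP1 x ε (ε * ((n:ℝ) * P x) + ε ^ 2 * n)
              (Tc.filter (fun xs =>
                ε * n < ((univ.filter fun i => xs i = x).card : ℝ) - n * P x))
              (by intro xs hxs
                  have := (Finset.mem_filter.mp hxs).2
                  nlinarith [this])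
            calc _ ≤ Real.exp ((n:ℝ) * (P x * ε + ε ^ 2 / 2)
                  - (ε * ((n:ℝ) * P x) + ε ^ 2 * n)) := this
              _ = Real.exp (-(n : ℝ) * ε ^ 2 / 2) := by congr 1; ring
          have hlo : ∑ xs ∈ Tc.filter (fun xs =>
              ((univ.filter fun i => xs i = x).card : ℝ) - n * P x < -(ε * n)), ∏ i, P (xs i)
              ≤ Real.exp (-(n : ℝ) * ε ^ 2 / 2) := by
            have := tail_bound k n P hP hP1 x (-ε) (-(ε * ((n:ℝ) * P x)) + ε ^ 2 * n)
              (Tc.filter (fun xs =>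
                ((univ.filter fun i => xs i = x).card : ℝ) - n * P x < -(ε * n)))
              (by intro xs hxs
                  have := (Finset.mem_filter.mp hxs).2
                  nlinarith [this])
            calc _ ≤ Real.exp ((n:ℝ) * (P x * (-ε) + (-ε) ^ 2 / 2)
                  - (-(ε * ((n:ℝ) * P x)) + ε ^ 2 * n)) := this
              _ = Real.exp (-(n : ℝ) * ε ^ 2 / 2) := by congr 1; ring
          linarith
      _ = 2 * k * Real.exp (-(n : ℝ) * ε ^ 2 / 2) := by
          rw [Finset.sum_const, Finset.card_univ, Fintype.card_fin, nsmul_eq_mul]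
          ring
  -- assemble
  have hsplit := Finset.sum_filter_add_sum_filter_not Finset.univ cond (fun xs => ∏ i, P (xs i))
  rw [h3] at hsplit
  have hTcard : (1 : ℝ) - 2 * k * Real.exp (-(n : ℝ) * ε ^ 2 / 2) ≤ (T.card : ℝ) * M := by
    have : ∑ xs ∈ T, ∏ i, P (xs i) ≥ 1 - 2 * k * Real.exp (-(n : ℝ) * ε ^ 2 / 2) := by
      linarith [h2]
    linarith [h1]
  rw [ge_iff_le]
  have hMpos : (0:ℝ) < M := Real.exp_pos _
  have key : Real.exp ((n : ℝ) * H - (n : ℝ) * ε * D) = M⁻¹ := by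
    rw [hM, ← Real.exp_neg]; congr 1; ring
  rw [key, ← div_eq_mul_inv, div_le_iff₀ hMpos]
  exact hTcard
end
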